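/- For Hermitian positive semidefinite n×n matrices F and Δ with Δ ≠ 0 and F positive definite, det(I + F + Δ) > det(I + F). -/

import Mathlib

open Matrix ComplexOrder

/-- For a PSD nonzero matrix `M`, `det (1 + M)` is a real number `> 1`. -/
lemma det_one_add_psd_gt {n : ℕ} (M : Matrix (Fin n) (Fin n) ℂ)
    (hM : M.PosSemidef) (h0 : M ≠ 0) :
    ∃ r : ℝ, 1 < r ∧ (1 + M).det = (r : ℂ) := by
  classical
  set U : Matrix (Fin n) (Fin n) ℂ := (hM.1.eigenvectorUnitary : Matrix (Fin n) (Fin n) ℂ)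
  have hU : U * star U = 1 := (Matrix.mem_unitaryGroup_iff).mp hM.1.eigenvectorUnitary.2
  have hspec := hM.1.spectral_theorem
  set D : Matrix (Fin n) (Fin n) ℂ :=
    Matrix.diagonal (RCLike.ofReal ∘ hM.1.eigenvalues) with hD
  have h1M : 1 + M = U * (1 + D) * star U := by
    rw [Matrix.mul_add, Matrix.add_mul, Matrix.mul_one, hU]
    exact congrArg (1 + ·) hspec
  have hdet : (1 + M).det = (1 + D).det := by
    rw [h1M, Matrix.det_mul, Matrix.det_mul]
    have h1 : U.det * (star U).det = 1 := by rw [← Matrix.det_mul, hU, Matrix.det_one]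
    calc U.det * (1 + D).det * (star U).det
        = U.det * (star U).det * (1 + D).det := by ring
      _ = (1 + D).det := by rw [h1, one_mul]
  have hdetD : (1 + D).det = ((∏ i, (1 + hM.1.eigenvalues i) : ℝ) : ℂ) := by
    have : (1 : Matrix (Fin n) (Fin n) ℂ) + D
        = Matrix.diagonal (fun i => ((1 + hM.1.eigenvalues i : ℝ) : ℂ)) := by
      rw [hD, ← Matrix.diagonal_one, Matrix.diagonal_add]
      funext i
      push_cast
      rfl
    rw [this, Matrix.det_diagonal]
    push_cast
    rfl
  refine ⟨∏ i, (1 + hM.1.eigenvalues i), ?_, by rw [hdet, hdetD]⟩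
  -- some eigenvalue is nonzero
  have hex : ∃ i, hM.1.eigenvalues i ≠ 0 := by
    by_contra h
    push_neg at h
    apply h0
    have : (fun i => hM.1.eigenvalues i) = 0 := funext h
    rw [hspec]
    have : D = 0 := by
      rw [hD]
      have : (RCLike.ofReal ∘ hM.1.eigenvalues : Fin n → ℂ) = fun _ => 0 := by
        funext i; simp [h i]
      rw [this]
      simp [Matrix.diagonal_zero]
    rw [this, map_zero]
  obtain ⟨i, hi⟩ := hex
  have hipos : 0 < hM.1.eigenvalues i := lt_of_le_of_ne (hM.eigenvalues_nonneg i) (Ne.symm hi)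
  calc (1 : ℝ) = ∏ _i : Fin n, 1 := by simp
    _ < ∏ i, (1 + hM.1.eigenvalues i) := by
        apply Finset.prod_lt_prod
        · intro j _; exact one_pos
        · intro j _
          have := hM.eigenvalues_nonneg j
          linarith
        · exact ⟨i, Finset.mem_univ i, by linarith⟩

/-- Strict determinant monotonicity: for `F` Hermitian positive definite and `Δ` Hermitian
PSD with `Δ ≠ 0`, `det (I + F + Δ) > det (I + F)`. -/
theorem det_one_add_strict_mono {n : ℕ} (F Δ : Matrix (Fin n) (Fin n) ℂ)
    (hF : F.PosDef) (hΔ : Δ.PosSemidef) (hΔ0 : Δ ≠ 0) :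
    (1 + F).det.re < (1 + F + Δ).det.re := by
  classical
  set A : Matrix (Fin n) (Fin n) ℂ := 1 + F with hAdef
  have hA : A.PosDef := Matrix.PosDef.one.add hF
  obtain ⟨S, hS, hSS⟩ : ∃ S : Matrix (Fin n) (Fin n) ℂ, S.PosSemidef ∧ S * S = A := by
    open scoped MatrixOrder in
    exact ⟨CFC.sqrt A, (CFC.sqrt_nonneg A).posSemidef,
      CFC.sqrt_mul_sqrt_self A hA.posSemidef.nonneg⟩
  have hdetA : (0 : ℂ) < A.det := hA.det_pos
  have hdetS : IsUnit S.det := by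
    rw [isUnit_iff_ne_zero]
    intro h
    have : A.det = 0 := by rw [← hSS, Matrix.det_mul, h, mul_zero]
    exact hdetA.ne' this
  have hSinv : S * S⁻¹ = 1 := Matrix.mul_nonsing_inv S hdetS
  have hinvS : S⁻¹ * S = 1 := Matrix.nonsing_inv_mul S hdetS
  set M : Matrix (Fin n) (Fin n) ℂ := S⁻¹ * Δ * S⁻¹ with hMdef
  have hTH : (S⁻¹).IsHermitian := hS.1.inv
  have hM : M.PosSemidef := by
    have := hΔ.conjTranspose_mul_mul_same S⁻¹
    rwa [hTH.eq] at this
  have hSMS : S * M * S = Δ := by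
    rw [hMdef]
    calc S * (S⁻¹ * Δ * S⁻¹) * S = (S * S⁻¹) * Δ * (S⁻¹ * S) := by
          simp only [Matrix.mul_assoc]
      _ = Δ := by rw [hSinv, hinvS, Matrix.one_mul, Matrix.mul_one]
  have hM0 : M ≠ 0 := by
    intro h
    apply hΔ0
    rw [← hSMS, h, Matrix.mul_zero, Matrix.zero_mul]
  obtain ⟨r, hr, hrdet⟩ := det_one_add_psd_gt M hM hM0
  have hAD : A + Δ = S * (1 + M) * S := by
    rw [Matrix.mul_add, Matrix.add_mul, Matrix.mul_one, hSS, hSMS]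
  have hdet : (A + Δ).det = A.det * (r : ℂ) := by
    rw [hAD, Matrix.det_mul, Matrix.det_mul, hrdet, ← hSS, Matrix.det_mul]
    ring
  have him : A.det.im = 0 := by
    have := hdetA
    rw [Complex.lt_def] at this
    exact this.2.symm
  have hre : 0 < A.det.re := by
    have := hdetA
    rw [Complex.lt_def] at this
    exact this.1
  show A.det.re < (A + Δ).det.re
  rw [hdet, Complex.mul_re, Complex.ofReal_re, Complex.ofReal_im, him]
  simp only [mul_zero, sub_zero, zero_mul]
  nlinarith
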